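/- Suppose A₊, A₋ : ℝ → ℝ are differentiable with G₊ := A₊' + (ω/2)A₋ = 0 and G₋ := A₋' - (ω/2)A₊ = 0. Then for any real constants C₁,…,C₈, the eight functions μⁱⱼₖ defined by μ¹₁₁ = C₅A₋ + C₆A₊ + C₇D₋ + C₈D₊, μ¹₁₂ = C₁A₊ + C₂A₋ - C₇D₊ + C₈D₋, μ¹₂₁ = -C₁A₊ - C₂A₋ - C₃A₊ - C₄A₋ - C₅A₊ + C₆A₋ - C₇D₊ + C₈D₋, μ¹₂₂ = -C₃A₋ + C₄A₊ - C₇D₋ - C₈D₊, μ²₁₁ = C₃A₊ + C₄A₋ - C₇D₊ + C₈D₋, μ²₁₂ = C₁A₋ - C₂A₊ + C₃A₋ - C₄A₊ + C₅A₋ + C₆A₊ - C₇D₋ - C₈D₊, μ²₂₁ = -C₁A₋ + C₂A₊ - C₇D₋ - C₈D₊, μ²₂₂ = -C₅A₊ + C₆A₋ + C₇D₊ - C₈D₋ (where D₊ = (A₊/2)(A₊² - 3A₋²), D₋ = (A₋/2)(3A₊² - A₋²)) satisfy the operadic Lax equations: μ̇¹₁₁ = -(ω/2)(μ²₁₁ +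 μ¹₂₁ + μ¹₁₂), μ̇²₁₁ = (ω/2)(μ¹₁₁ - μ²₂₁ - μ²₁₂), μ̇¹₁₂ = -(ω/2)(μ²₁₂ + μ¹₂₂ - μ¹₁₁), μ̇²₁₂ = (ω/2)(μ¹₁₂ - μ²₂₂ + μ²₁₁), μ̇¹₂₁ = -(ω/2)(μ²₂₁ - μ¹₁₁ + μ¹₂₂), μ̇²₂₁ = (ω/2)(μ¹₂₁ + μ²₁₁ - μ²₂₂), μ̇¹₂₂ = -(ω/2)(μ²₂₂ - μ¹₁₂ - μ¹₂₁), μ̇²₂₂ = (ω/2)(μ¹₂₂ + μ²₁₂ + μ²₂₁). -/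
import Mathlib


theorem stmt_8 (ω : ℝ) (Ap Am Dp Dm : ℝ → ℝ)
    (hAp : ∀ t, HasDerivAt Ap (-(ω / 2) * Am t) t)
    (hAm : ∀ t, HasDerivAt Am ((ω / 2) * Ap t) t)
    (hDp : ∀ t, Dp t = (Ap t / 2) * (Ap t ^ 2 - 3 * Am t ^ 2))
    (hDm : ∀ t, Dm t = (Am t / 2) * (3 * Ap t ^ 2 - Am t ^ 2))
    (C₁ C₂ C₃ C₄ C₅ C₆ C₇ C₈ : ℝ)
    (μ111 μ112 μ121 μ122 μ211 μ212 μ221 μ222 : ℝ → ℝ)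
    (h111 : ∀ t, μ111 t = C₅ * Am t + C₆ * Ap t + C₇ * Dm t + C₈ * Dp t)
    (h112 : ∀ t, μ112 t = C₁ * Ap t + C₂ * Am t - C₇ * Dp t + C₈ * Dm t)
    (h121 : ∀ t, μ121 t = -C₁ * Ap t - C₂ * Am t - C₃ * Ap t - C₄ * Am t
      - C₅ * Ap t + C₆ * Am t - C₇ * Dp t + C₈ * Dm t)
    (h122 : ∀ t, μ122 t = -C₃ * Am t + C₄ * Ap t - C₇ * Dm t - C₈ * Dp t)
    (h211 : ∀ t, μ211 t = C₃ * Ap t + C₄ * Am t - C₇ * Dp t + C₈ * Dm t)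
    (h212 : ∀ t, μ212 t = C₁ * Am t - C₂ * Ap t + C₃ * Am t - C₄ * Ap t
      + C₅ * Am t + C₆ * Ap t - C₇ * Dm t - C₈ * Dp t)
    (h221 : ∀ t, μ221 t = -C₁ * Am t + C₂ * Ap t - C₇ * Dm t - C₈ * Dp t)
    (h222 : ∀ t, μ222 t = -C₅ * Ap t + C₆ * Am t + C₇ * Dp t - C₈ * Dm t) :
    ∀ t : ℝ,
      HasDerivAt μ111 (-(ω / 2) * (μ211 t + μ121 t + μ112 t)) t ∧
      HasDerivAt μ211 ((ω / 2) * (μ111 t - μ221 t - μ212 t)) t ∧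
      HasDerivAt μ112 (-(ω / 2) * (μ212 t + μ122 t - μ111 t)) t ∧
      HasDerivAt μ212 ((ω / 2) * (μ112 t - μ222 t + μ211 t)) t ∧
      HasDerivAt μ121 (-(ω / 2) * (μ221 t - μ111 t + μ122 t)) t ∧
      HasDerivAt μ221 ((ω / 2) * (μ121 t + μ211 t - μ222 t)) t ∧
      HasDerivAt μ122 (-(ω / 2) * (μ222 t - μ112 t - μ121 t)) t ∧
      HasDerivAt μ222 ((ω / 2) * (μ122 t + μ212 t + μ221 t)) t := by
  -- Derivatives of the cubic functions Dp and Dm.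
  have hDp' : ∀ t, HasDerivAt Dp (-(3 * ω / 2) * Dm t) t := by
    intro t
    have h : HasDerivAt (fun t => (Ap t / 2) * (Ap t ^ 2 - 3 * Am t ^ 2))
        ((-(ω / 2) * Am t / 2) * (Ap t ^ 2 - 3 * Am t ^ 2)
          + (Ap t / 2) * ((2 * Ap t ^ 1) * (-(ω / 2) * Am t)
            - 3 * ((2 * Am t ^ 1) * ((ω / 2) * Ap t)))) t := by
      exact ((hAp t).div_const 2).mul
        (((hAp t).pow 2).sub ((((hAm t).pow 2)).const_mul 3))
    have heq : (fun t => (Ap t / 2) * (Ap t ^ 2 - 3 * Am t ^ 2)) = Dp :=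
      funext fun t => (hDp t).symm
    rw [heq] at h
    convert h using 1
    rw [hDm t]; ring
  have hDm' : ∀ t, HasDerivAt Dm ((3 * ω / 2) * Dp t) t := by
    intro t
    have h : HasDerivAt (fun t => (Am t / 2) * (3 * Ap t ^ 2 - Am t ^ 2))
        (((ω / 2) * Ap t / 2) * (3 * Ap t ^ 2 - Am t ^ 2)
          + (Am t / 2) * (3 * ((2 * Ap t ^ 1) * (-(ω / 2) * Am t))
            - (2 * Am t ^ 1) * ((ω / 2) * Ap t))) t := by
      exact ((hAm t).div_const 2).mul
        ((((hAp t).pow 2).const_mul 3).sub ((hAm t).pow 2))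
    have heq : (fun t => (Am t / 2) * (3 * Ap t ^ 2 - Am t ^ 2)) = Dm :=
      funext fun t => (hDm t).symm
    rw [heq] at h
    convert h using 1
    rw [hDp t]; ring
  intro t
  refine ⟨?_, ?_, ?_, ?_, ?_, ?_, ?_, ?_⟩
  · have h : HasDerivAt (fun t => C₅ * Am t + C₆ * Ap t + C₇ * Dm t + C₈ * Dp t)
        (C₅ * ((ω / 2) * Ap t) + C₆ * (-(ω / 2) * Am t) + C₇ * ((3 * ω / 2) * Dp t)
          + C₈ * (-(3 * ω / 2) * Dm t)) t :=
      ((((hAm t).const_mul C₅).add ((hAp t).const_mul C₆)).add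
        ((hDm' t).const_mul C₇)).add ((hDp' t).const_mul C₈)
    rw [show (fun t => C₅ * Am t + C₆ * Ap t + C₇ * Dm t + C₈ * Dp t) = μ111 from
      funext fun t => (h111 t).symm] at h
    convert h using 1
    rw [h211 t, h121 t, h112 t]; ring
  · have h : HasDerivAt (fun t => C₃ * Ap t + C₄ * Am t - C₇ * Dp t + C₈ * Dm t)
        (C₃ * (-(ω / 2) * Am t) + C₄ * ((ω / 2) * Ap t) - C₇ * (-(3 * ω / 2) * Dm t)
          + C₈ * ((3 * ω / 2) * Dp t)) t :=
      ((((hAp t).const_mul C₃).add ((hAm t).const_mul C₄)).sub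
        ((hDp' t).const_mul C₇)).add ((hDm' t).const_mul C₈)
    rw [show (fun t => C₃ * Ap t + C₄ * Am t - C₇ * Dp t + C₈ * Dm t) = μ211 from
      funext fun t => (h211 t).symm] at h
    convert h using 1
    rw [h111 t, h221 t, h212 t]; ring
  · have h : HasDerivAt (fun t => C₁ * Ap t + C₂ * Am t - C₇ * Dp t + C₈ * Dm t)
        (C₁ * (-(ω / 2) * Am t) + C₂ * ((ω / 2) * Ap t) - C₇ * (-(3 * ω / 2) * Dm t)
          + C₈ * ((3 * ω / 2) * Dp t)) t :=
      ((((hAp t).const_mul C₁).add ((hAm t).const_mul C₂)).sub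
        ((hDp' t).const_mul C₇)).add ((hDm' t).const_mul C₈)
    rw [show (fun t => C₁ * Ap t + C₂ * Am t - C₇ * Dp t + C₈ * Dm t) = μ112 from
      funext fun t => (h112 t).symm] at h
    convert h using 1
    rw [h212 t, h122 t, h111 t]; ring
  · have h : HasDerivAt (fun t => C₁ * Am t - C₂ * Ap t + C₃ * Am t - C₄ * Ap t
        + C₅ * Am t + C₆ * Ap t - C₇ * Dm t - C₈ * Dp t)
        (C₁ * ((ω / 2) * Ap t) - C₂ * (-(ω / 2) * Am t) + C₃ * ((ω / 2) * Ap t)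
          - C₄ * (-(ω / 2) * Am t) + C₅ * ((ω / 2) * Ap t) + C₆ * (-(ω / 2) * Am t)
          - C₇ * ((3 * ω / 2) * Dp t) - C₈ * (-(3 * ω / 2) * Dm t)) t :=
      ((((((((hAm t).const_mul C₁).sub ((hAp t).const_mul C₂)).add
        ((hAm t).const_mul C₃)).sub ((hAp t).const_mul C₄)).add
        ((hAm t).const_mul C₅)).add ((hAp t).const_mul C₆)).sub
        ((hDm' t).const_mul C₇)).sub ((hDp' t).const_mul C₈)
    rw [show (fun t => C₁ * Am t - C₂ * Ap t + C₃ * Am t - C₄ * Ap t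
        + C₅ * Am t + C₆ * Ap t - C₇ * Dm t - C₈ * Dp t) = μ212 from
      funext fun t => (h212 t).symm] at h
    convert h using 1
    rw [h112 t, h222 t, h211 t]; ring
  · have h : HasDerivAt (fun t => -C₁ * Ap t - C₂ * Am t - C₃ * Ap t - C₄ * Am t
        - C₅ * Ap t + C₆ * Am t - C₇ * Dp t + C₈ * Dm t)
        (-C₁ * (-(ω / 2) * Am t) - C₂ * ((ω / 2) * Ap t) - C₃ * (-(ω / 2) * Am t)
          - C₄ * ((ω / 2) * Ap t) - C₅ * (-(ω / 2) * Am t) + C₆ * ((ω / 2) * Ap t)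
          - C₇ * (-(3 * ω / 2) * Dm t) + C₈ * ((3 * ω / 2) * Dp t)) t :=
      ((((((((hAp t).const_mul (-C₁)).sub ((hAm t).const_mul C₂)).sub
        ((hAp t).const_mul C₃)).sub ((hAm t).const_mul C₄)).sub
        ((hAp t).const_mul C₅)).add ((hAm t).const_mul C₆)).sub
        ((hDp' t).const_mul C₇)).add ((hDm' t).const_mul C₈)
    rw [show (fun t => -C₁ * Ap t - C₂ * Am t - C₃ * Ap t - C₄ * Am t
        - C₅ * Ap t + C₆ * Am t - C₇ * Dp t + C₈ * Dm t) = μ121 from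
      funext fun t => (h121 t).symm] at h
    convert h using 1
    rw [h221 t, h111 t, h122 t]; ring
  · have h : HasDerivAt (fun t => -C₁ * Am t + C₂ * Ap t - C₇ * Dm t - C₈ * Dp t)
        (-C₁ * ((ω / 2) * Ap t) + C₂ * (-(ω / 2) * Am t) - C₇ * ((3 * ω / 2) * Dp t)
          - C₈ * (-(3 * ω / 2) * Dm t)) t :=
      ((((hAm t).const_mul (-C₁)).add ((hAp t).const_mul C₂)).sub
        ((hDm' t).const_mul C₇)).sub ((hDp' t).const_mul C₈)
    rw [show (fun t => -C₁ * Am t + C₂ * Ap t - C₇ * Dm t - C₈ * Dp t) = μ221 from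
      funext fun t => (h221 t).symm] at h
    convert h using 1
    rw [h121 t, h211 t, h222 t]; ring
  · have h : HasDerivAt (fun t => -C₃ * Am t + C₄ * Ap t - C₇ * Dm t - C₈ * Dp t)
        (-C₃ * ((ω / 2) * Ap t) + C₄ * (-(ω / 2) * Am t) - C₇ * ((3 * ω / 2) * Dp t)
          - C₈ * (-(3 * ω / 2) * Dm t)) t :=
      ((((hAm t).const_mul (-C₃)).add ((hAp t).const_mul C₄)).sub
        ((hDm' t).const_mul C₇)).sub ((hDp' t).const_mul C₈)
    rw [show (fun t => -C₃ * Am t + C₄ * Ap t - C₇ * Dm t - C₈ * Dp t) = μ122 from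
      funext fun t => (h122 t).symm] at h
    convert h using 1
    rw [h222 t, h112 t, h121 t]; ring
  · have h : HasDerivAt (fun t => -C₅ * Ap t + C₆ * Am t + C₇ * Dp t - C₈ * Dm t)
        (-C₅ * (-(ω / 2) * Am t) + C₆ * ((ω / 2) * Ap t) + C₇ * (-(3 * ω / 2) * Dm t)
          - C₈ * ((3 * ω / 2) * Dp t)) t :=
      ((((hAp t).const_mul (-C₅)).add ((hAm t).const_mul C₆)).add
        ((hDp' t).const_mul C₇)).sub ((hDm' t).const_mul C₈)
    rw [show (fun t => -C₅ * Ap t + C₆ * Am t + C₇ * Dp t - C₈ * Dm t) = μ222 from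
      funext fun t => (h222 t).symm] at h
    convert h using 1
    rw [h122 t, h212 t, h221 t]; ring
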